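/- Let h be a holomorphic function on the open unit disk, continuous on the closed disk, such that Re(z^{2k} + h(z)) = 0 and Im h(z) = 0 for all z on the unit circle. Then h(z) = −z^{2k}/2 is forced by the boundary conditions on the real part, yet this h fails the boundary condition Im h = 0 on S¹; hence no such h exists. -/

import Mathlib

open Complex Metric Set

theorem stmt12 (k : ℕ) (hk : 0 < k) (h : ℂ → ℂ)
    (hcont : ContinuousOn h (Metric.closedBall (0 : ℂ) 1))
    (hdiff : DifferentiableOn ℂ h (Metric.ball (0 : ℂ) 1))
    (hbd : ∀ z ∈ Metric.sphere (0 : ℂ) 1, (z ^ (2 * k) + h z).re = 0 ∧ (h z).im = 0) :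
    False := by
  have hclos : closure (ball (0:ℂ) 1) = closedBall (0:ℂ) 1 := closure_ball 0 one_ne_zero
  have hfr : frontier (ball (0:ℂ) 1) = sphere (0:ℂ) 1 := frontier_ball 0 one_ne_zero
  -- Step 1: Im h = 0 on the closed ball, by max modulus applied to exp(±I h)
  have him : ∀ z ∈ closedBall (0:ℂ) 1, (h z).im = 0 := by
    intro z hz
    have key : ∀ c : ℂ, c = I ∨ c = -I → ‖Complex.exp (c * h z)‖ ≤ 1 := by
      intro c hc
      apply Complex.norm_le_of_forall_mem_frontier_norm_le isBounded_ball
        (f := fun w => Complex.exp (c * h w))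
      · exact ⟨(hdiff.const_mul c).cexp, by rw [hclos]; exact (hcont.const_smul c).cexp⟩
      · intro w hw
        rw [hfr] at hw
        have := (hbd w hw).2
        rcases hc with rfl | rfl <;>
          simp [Complex.norm_exp, this]
      · rwa [hclos]
    have h1 := key I (Or.inl rfl)
    have h2 := key (-I) (Or.inr rfl)
    rw [Complex.norm_exp] at h1 h2
    have e1 : (I * h z).re = -(h z).im := by simp
    have e2 : (-I * h z).re = (h z).im := by simp
    rw [e1] at h1; rw [e2] at h2
    have := Real.exp_le_one_iff.mp h1
    have := Real.exp_le_one_iff.mp h2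
    linarith
  -- Step 2: h is constant on the ball (open mapping theorem)
  have han : AnalyticOnNhd ℂ h (ball (0:ℂ) 1) := hdiff.analyticOnNhd isOpen_ball
  have hconn : IsPreconnected (ball (0:ℂ) 1) := (convex_ball (0:ℂ) 1).isPreconnected
  rcases han.is_constant_or_isOpen hconn with ⟨c, hc⟩ | hopen
  · -- h = c on closed ball by continuity
    have hcc : EqOn h (fun _ => c) (closedBall (0:ℂ) 1) := by
      rw [← hclos]
      exact Set.EqOn.of_subset_closure hc (by rw [hclos]; exact hcont) continuousOn_const
        subset_closure subset_rfl
    -- evaluate boundary condition at 1 and at a 2k-th root of -1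
    have h1 : ((1:ℂ) ^ (2*k) + h 1).re = 0 := (hbd 1 (by simp)).1
    set w : ℂ := Complex.exp (Real.pi * I / (2*k))
    have hw1 : ‖w‖ = 1 := by
      rw [Complex.norm_exp]
      have : ((Real.pi : ℂ) * I / (2*k)).re = 0 := by
        simp [Complex.div_re]
      rw [this, Real.exp_zero]
    have hwpow : w ^ (2*k) = -1 := by
      rw [← Complex.exp_nat_mul]
      have hkne : (k : ℂ) ≠ 0 := Nat.cast_ne_zero.mpr hk.ne'
      rw [show ((2*k : ℕ) : ℂ) * ((Real.pi : ℂ) * I / (2*k)) = Real.pi * I by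
        push_cast; field_simp]
      exact Complex.exp_pi_mul_I
    have h2 : (w ^ (2*k) + h w).re = 0 := (hbd w (by simp [hw1])).1
    rw [hwpow] at h2
    rw [hcc (by simp)] at h1
    rw [hcc (by simp [hw1, mem_closedBall, dist_eq_norm])] at h2
    simp at h1 h2
    linarith
  · -- h '' ball is open but contained in the real line: contradiction
    have hne : (0:ℂ) ∈ ball (0:ℂ) 1 := by simp
    have hO := hopen (ball (0:ℂ) 1) subset_rfl isOpen_ball
    rcases Metric.isOpen_iff.mp hO (h 0) ⟨0, hne, rfl⟩ with ⟨ε, hε, hb⟩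
    have hmem : h 0 + (ε/2) * I ∈ h '' ball (0:ℂ) 1 := by
      apply hb
      rw [mem_ball, dist_eq_norm,
        show h 0 + (ε:ℂ)/2 * I - h 0 = ((ε/2 : ℝ) : ℂ) * I by push_cast; ring,
        norm_mul]
      simp [abs_of_pos hε]
      linarith
    rcases hmem with ⟨x, hx, hxe⟩
    have h0im : (h 0).im = 0 := him 0 (by simp)
    have hxim : (h x).im = 0 := him x (ball_subset_closedBall hx)
    have : (h 0 + (ε/2) * I).im = ε/2 := by simp [h0im]
    rw [← hxe, hxim] at this
    linarith
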